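/- Let F = {X_1,…,X_m} be a family of finite sets in ℝ^d with m ≤ d+1. If for every non-empty I ⊆ {1,…,m}, φ(∪_{i∈I} X_i) ≥ |I|, then F has a system of general position representatives. -/

import Mathlib

open Metric Finset
open scoped Classical

noncomputable section

/-- A finite set in `ℝ^d` is in general position if every subset of size at most `d+1`
is affinely independent. -/
def InGenPos (d : ℕ) (X : Finset (EuclideanSpace ℝ (Fin d))) : Prop :=
  ∀ S ⊆ X, S.card ≤ d + 1 →
    AffineIndependent ℝ (fun p : S => (p : EuclideanSpace ℝ (Fin d)))

namespace StmtAux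

variable {V : Type*} [AddCommGroup V] [Module ℝ V]

lemma affInd_iff_lin {ι : Type*} (p : ι → V) :
    AffineIndependent ℝ p ↔ LinearIndependent ℝ (fun i => ((p i, (1:ℝ)) : V × ℝ)) := by
  rw [affineIndependent_iff, linearIndependent_iff']
  have key : ∀ (s : Finset ι) (g : ι → ℝ),
      (∑ i ∈ s, g i • ((p i, (1:ℝ)) : V × ℝ)) = (∑ i ∈ s, g i • p i, ∑ i ∈ s, g i) := by
    intro s g
    refine Prod.ext ?_ ?_ <;> simp [Prod.fst_sum, Prod.snd_sum]
  constructor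
  · intro h s g hg
    rw [key] at hg
    exact h s g (congrArg Prod.snd hg) (congrArg Prod.fst hg)
  · intro h s w hw1 hw2
    refine h s w ?_
    rw [key, hw1, hw2]
    rfl

variable [FiniteDimensional ℝ V]

def rk (A : Finset V) : ℕ := Module.finrank ℝ (Submodule.span ℝ (A : Set V))

lemma rk_mono {A B : Finset V} (h : A ⊆ B) : rk A ≤ rk B :=
  Submodule.finrank_mono (Submodule.span_mono (by exact_mod_cast h))

lemma rk_le_card (A : Finset V) : rk A ≤ A.card := by
  have := finrank_span_finset_le_card (R := ℝ) A
  simpa [Set.finrank, rk] using this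

lemma rk_submodular [DecidableEq V] (A B : Finset V) : rk (A ∪ B) + rk (A ∩ B) ≤ rk A + rk B := by
  have h1 : Submodule.span ℝ ((A ∪ B : Finset V) : Set V)
      = Submodule.span ℝ (A : Set V) ⊔ Submodule.span ℝ (B : Set V) := by
    rw [Finset.coe_union, Submodule.span_union]
  have h2 : Submodule.span ℝ ((A ∩ B : Finset V) : Set V)
      ≤ Submodule.span ℝ (A : Set V) ⊓ Submodule.span ℝ (B : Set V) := by
    rw [Finset.coe_inter]
    exact le_inf (Submodule.span_mono Set.inter_subset_left)
      (Submodule.span_mono Set.inter_subset_right)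
  have h3 := Submodule.finrank_sup_add_finrank_inf_eq
    (Submodule.span ℝ (A : Set V)) (Submodule.span ℝ (B : Set V))
  have h4 : rk (A ∩ B) ≤ Module.finrank ℝ
      ↥(Submodule.span ℝ (A : Set V) ⊓ Submodule.span ℝ (B : Set V)) :=
    Submodule.finrank_mono h2
  unfold rk at *
  rw [h1]
  omega

lemma rado [DecidableEq V] (N : ℕ) : ∀ (m : ℕ) (W : Fin m → Finset V), (∑ i, (W i).card ≤ N) →
    (∀ I : Finset (Fin m), I.Nonempty → I.card ≤ rk (I.biUnion W)) →
    ∃ x : Fin m → V, (∀ i, x i ∈ W i) ∧ LinearIndependent ℝ x := by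
  induction N with
  | zero =>
    intro m W hsum hyp
    rcases Nat.eq_zero_or_pos m with hm | hm
    · subst hm
      exact ⟨Fin.elim0, fun i => i.elim0, linearIndependent_empty_type⟩
    · exfalso
      have i0 : Fin m := ⟨0, hm⟩
      have h1 := hyp {i0} ⟨i0, mem_singleton_self i0⟩
      have hc : (W i0).card = 0 := by
        have hle : (W i0).card ≤ ∑ i, (W i).card := by
          simpa using Finset.single_le_sum (f := fun i => (W i).card)
            (fun i _ => Nat.zero_le _) (mem_univ i0)
        omega
      rw [Finset.card_eq_zero] at hc
      rw [Finset.singleton_biUnion, hc] at h1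
      simp [rk] at h1
  | succ N ih =>
    intro m W hsum hyp
    rcases Nat.eq_zero_or_pos m with hm | hm
    · subst hm
      exact ⟨Fin.elim0, fun i => i.elim0, linearIndependent_empty_type⟩
    have hne : ∀ i, (W i).Nonempty := by
      intro i
      rcases (W i).eq_empty_or_nonempty with h | h
      · exfalso
        have h1 := hyp {i} ⟨i, mem_singleton_self i⟩
        rw [Finset.singleton_biUnion, h] at h1
        simp [rk] at h1
      · exact h
    by_cases hbig : ∃ j, 2 ≤ (W j).card
    · obtain ⟨j, hj⟩ := hbig
      obtain ⟨e1, he1, e2, he2, hee⟩ := Finset.one_lt_card.mp hj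
      set upd : V → Fin m → Finset V :=
        fun e => Function.update W j ((W j).erase e) with hupd
      have hupd_same : ∀ e, upd e j = (W j).erase e := fun e => by
        simp [hupd]
      have hupd_ne : ∀ (e : V) (i : Fin m), i ≠ j → upd e i = W i := fun e i h => by
        simp [hupd, Function.update_of_ne h]
      have hsum' : ∀ e ∈ W j, ∑ i, ((upd e) i).card ≤ N := by
        intro e he
        have hsplit : ∀ (Z : Fin m → Finset V),
            ∑ i, (Z i).card = (Z j).card + ∑ i ∈ univ.erase j, (Z i).card := by
          intro Z
          rw [← Finset.add_sum_erase _ _ (mem_univ j)]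
        have h1 := hsplit W
        have h2 := hsplit (upd e)
        have h3 : ∑ i ∈ univ.erase j, ((upd e) i).card
            = ∑ i ∈ univ.erase j, (W i).card := by
          refine Finset.sum_congr rfl fun i hi => ?_
          rw [hupd_ne e i (Finset.ne_of_mem_erase hi)]
        have h4 : ((upd e) j).card = (W j).card - 1 := by
          rw [hupd_same, Finset.card_erase_of_mem he]
        omega
      have recover : ∀ e ∈ W j,
          (∀ I : Finset (Fin m), I.Nonempty → I.card ≤ rk (I.biUnion (upd e))) →
          ∃ x : Fin m → V, (∀ i, x i ∈ W i) ∧ LinearIndependent ℝ x := by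
        intro e he hcond
        obtain ⟨x, hx, hlin⟩ := ih m (upd e) (hsum' e he) hcond
        refine ⟨x, fun i => ?_, hlin⟩
        have hxi := hx i
        by_cases hij : i = j
        · subst hij
          rw [hupd_same] at hxi
          exact Finset.mem_of_mem_erase hxi
        · rwa [hupd_ne e i hij] at hxi
      by_cases h1 : ∀ I : Finset (Fin m), I.Nonempty → I.card ≤ rk (I.biUnion (upd e1))
      · exact recover e1 he1 h1
      by_cases h2 : ∀ I : Finset (Fin m), I.Nonempty → I.card ≤ rk (I.biUnion (upd e2))
      · exact recover e2 he2 h2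
      exfalso
      push_neg at h1 h2
      obtain ⟨I1, hI1ne, hI1⟩ := h1
      obtain ⟨I2, hI2ne, hI2⟩ := h2
      have hjmem : ∀ (e : V) (I : Finset (Fin m)), I.Nonempty →
          rk (I.biUnion (upd e)) < I.card → j ∈ I := by
        intro e I hne' hlt
        by_contra hj'
        have heq : I.biUnion (upd e) = I.biUnion W := by
          refine Finset.biUnion_congr rfl fun i hi => ?_
          rw [hupd_ne e i (fun h => hj' (h ▸ hi))]
        rw [heq] at hlt
        exact absurd (hyp I hne') (not_le.mpr hlt)
      have hj1 : j ∈ I1 := hjmem e1 I1 hI1ne hI1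
      have hj2 : j ∈ I2 := hjmem e2 I2 hI2ne hI2
      set A := I1.biUnion (upd e1) with hA
      set B := I2.biUnion (upd e2) with hB
      have hABu : (I1 ∪ I2).biUnion W ⊆ A ∪ B := by
        intro x hx
        simp only [Finset.mem_biUnion, Finset.mem_union] at hx
        obtain ⟨i, hi, hxi⟩ := hx
        rw [Finset.mem_union]
        by_cases hij : i = j
        · have hxj : x ∈ W j := hij ▸ hxi
          by_cases hxe : x = e1
          · right
            rw [hB, Finset.mem_biUnion]
            refine ⟨j, hj2, ?_⟩
            rw [hupd_same, Finset.mem_erase]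
            exact ⟨hxe ▸ hee, hxj⟩
          · left
            rw [hA, Finset.mem_biUnion]
            refine ⟨j, hj1, ?_⟩
            rw [hupd_same, Finset.mem_erase]
            exact ⟨hxe, hxj⟩
        · rcases hi with hi | hi
          · left
            rw [hA, Finset.mem_biUnion]
            exact ⟨i, hi, by rwa [hupd_ne e1 i hij]⟩
          · right
            rw [hB, Finset.mem_biUnion]
            exact ⟨i, hi, by rwa [hupd_ne e2 i hij]⟩
      have hABi : ((I1 ∩ I2).erase j).biUnion W ⊆ A ∩ B := by
        intro x hx
        simp only [Finset.mem_biUnion, Finset.mem_erase, Finset.mem_inter] at hx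
        obtain ⟨i, ⟨hij, hi1, hi2⟩, hxi⟩ := hx
        rw [Finset.mem_inter]
        constructor
        · rw [hA, Finset.mem_biUnion]
          exact ⟨i, hi1, by rwa [hupd_ne e1 i hij]⟩
        · rw [hB, Finset.mem_biUnion]
          exact ⟨i, hi2, by rwa [hupd_ne e2 i hij]⟩
      have hsub := rk_submodular A B
      have hU : (I1 ∪ I2).card ≤ rk (A ∪ B) :=
        le_trans (hyp _ ⟨j, Finset.mem_union_left _ hj1⟩) (rk_mono hABu)
      have hIc : (I1 ∩ I2).card - 1 ≤ rk (A ∩ B) := by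
        have hce : ((I1 ∩ I2).erase j).card = (I1 ∩ I2).card - 1 :=
          Finset.card_erase_of_mem (Finset.mem_inter.mpr ⟨hj1, hj2⟩)
        rcases ((I1 ∩ I2).erase j).eq_empty_or_nonempty with h | h
        · rw [h] at hce
          simp at hce
          omega
        · calc (I1 ∩ I2).card - 1 = ((I1 ∩ I2).erase j).card := hce.symm
            _ ≤ rk (((I1 ∩ I2).erase j).biUnion W) := hyp _ h
            _ ≤ rk (A ∩ B) := rk_mono hABi
      have hcards := Finset.card_union_add_card_inter I1 I2
      have h1card : 1 ≤ (I1 ∩ I2).card :=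
        Finset.card_pos.mpr ⟨j, Finset.mem_inter.mpr ⟨hj1, hj2⟩⟩
      omega
    · push_neg at hbig
      have hcard1 : ∀ i, (W i).card = 1 := by
        intro i
        have h1 := Finset.card_pos.mpr (hne i)
        have h2 := hbig i
        omega
      choose x hx using fun i => Finset.card_eq_one.mp (hcard1 i)
      refine ⟨x, fun i => by rw [hx i]; exact mem_singleton_self _, ?_⟩
      rw [linearIndependent_iff_card_eq_finrank_span]
      have hU : univ.biUnion W = Finset.image x univ := by
        ext y
        constructor
        · intro hy
          rw [Finset.mem_biUnion] at hy
          obtain ⟨i, _, hy⟩ := hy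
          rw [hx i, Finset.mem_singleton] at hy
          exact Finset.mem_image.mpr ⟨i, mem_univ i, hy.symm⟩
        · intro hy
          obtain ⟨i, _, rfl⟩ := Finset.mem_image.mp hy
          refine Finset.mem_biUnion.mpr ⟨i, mem_univ i, ?_⟩
          rw [hx i]
          exact mem_singleton_self _
      have hge : m ≤ rk (Finset.image x univ) := by
        have i0 : Fin m := ⟨0, hm⟩
        have := hyp univ ⟨i0, mem_univ i0⟩
        rwa [Finset.card_univ, Fintype.card_fin, hU] at this
      have hle : rk (Finset.image x univ) ≤ m := by
        refine le_trans (rk_le_card _) ?_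
        exact le_trans Finset.card_image_le (by simp)
      have hrange : Set.range x = ((Finset.image x univ : Finset V) : Set V) := by
        simp
      rw [Fintype.card_fin]
      have : Set.finrank ℝ (Set.range x) = rk (Finset.image x univ) := by
        rw [hrange]; rfl
      omega

end StmtAux

set_option maxHeartbeats 1000000 in
/-- For `m ≤ d+1` sets in `ℝ^d`, the Hall-type condition `φ(∪_{i∈I} X_i) ≥ |I|` for
every non-empty `I` suffices for a system of general position representatives. -/
theorem stmt4 (d m : ℕ) (hd : 1 ≤ d) (hm : m ≤ d + 1)
    (X : Fin m → Finset (EuclideanSpace ℝ (Fin d)))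
    (hyp : ∀ I : Finset (Fin m), I.Nonempty →
      ∃ S ⊆ I.biUnion X, InGenPos d S ∧ I.card ≤ S.card) :
    ∃ x : Fin m → EuclideanSpace ℝ (Fin d),
      (∀ i, x i ∈ X i) ∧ Function.Injective x ∧
        InGenPos d (Finset.image x Finset.univ) := by
  classical
  let E := EuclideanSpace ℝ (Fin d)
  let v : E → E × ℝ := fun p => (p, 1)
  let W : Fin m → Finset (E × ℝ) := fun i => (X i).image v
  have hW : ∀ I : Finset (Fin m), I.Nonempty → I.card ≤ StmtAux.rk (I.biUnion W) := by
    intro I hI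
    obtain ⟨S, hS, hgen, hcard⟩ := hyp I hI
    obtain ⟨T, hTS, hT⟩ := Finset.exists_subset_card_eq hcard
    have hIm : I.card ≤ m := by
      have := Finset.card_le_univ I
      simpa using this
    have hTle : T.card ≤ d + 1 := by rw [hT]; omega
    have haff := hgen T hTS hTle
    have hlin : LinearIndependent ℝ (fun q : T => v ↑q) :=
      (StmtAux.affInd_iff_lin (fun q : T => (↑q : E))).mp haff
    have hr : Set.range (fun q : T => v ↑q) = ((T.image v : Finset (E × ℝ)) : Set (E × ℝ)) := by
      rw [Finset.coe_image]
      ext y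
      simp [Set.range]
      constructor <;> rintro ⟨a, ha, h⟩ <;> exact ⟨a, ha, h⟩
    have hfr : StmtAux.rk (T.image v) = T.card := by
      have := finrank_span_eq_card hlin
      rw [hr] at this
      rw [StmtAux.rk, this, Fintype.card_coe]
    have hsub : T.image v ⊆ I.biUnion W := by
      intro y hy
      rw [Finset.mem_image] at hy
      obtain ⟨a, ha, rfl⟩ := hy
      have haX := hTS.trans hS ha
      rw [Finset.mem_biUnion] at haX
      obtain ⟨i, hi, hai⟩ := haX
      rw [Finset.mem_biUnion]
      exact ⟨i, hi, Finset.mem_image_of_mem v hai⟩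
    calc I.card = T.card := hT.symm
      _ = StmtAux.rk (T.image v) := hfr.symm
      _ ≤ StmtAux.rk (I.biUnion W) := StmtAux.rk_mono hsub
  obtain ⟨y, hy, hylin⟩ := StmtAux.rado (∑ i, (W i).card) m W le_rfl hW
  have hyX : ∀ i, ∃ a ∈ X i, v a = y i := by
    intro i
    have := hy i
    rwa [Finset.mem_image] at this
  choose x hxX hxv using hyX
  have hxy : (fun i => ((x i, (1:ℝ)) : E × ℝ)) = y := funext hxv
  have hlin : LinearIndependent ℝ (fun i => ((x i, (1:ℝ)) : E × ℝ)) := by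
    rw [hxy]; exact hylin
  have haff : AffineIndependent ℝ x := (StmtAux.affInd_iff_lin x).mpr hlin
  have hinj : Function.Injective x := haff.injective
  refine ⟨x, hxX, hinj, ?_⟩
  intro S hS _
  have h1 : AffineIndependent ℝ (fun q : Set.range x => (↑q : E)) := haff.range
  have h2 : ((S : Finset E) : Set E) ⊆ Set.range x := by
    intro a ha
    have := hS (by exact_mod_cast ha)
    rw [Finset.mem_image] at this
    obtain ⟨i, _, rfl⟩ := this
    exact Set.mem_range_self i
  exact h1.mono h2
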